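/- A finite Borel measure μ on Cantor space is Martin-Löf absolutely continuous if and only if μ assigns measure zero to the set of points of Cantor space that are not Martin-Löf random. -/

import Mathlib

open MeasureTheory
open scoped ENNReal

/-- The basic clopen cylinder `[σ]` of a finite binary string `σ`:
all `Z : ℕ → Bool` extending `σ`. -/
def cyl (σ : List Bool) : Set (ℕ → Bool) :=
  {Z | ∀ i : Fin σ.length, Z i = σ.get i}

/-- The `m`-th open set `G_m` determined by a test `f`: the union of the
cylinders `[σ]` over the strings `σ` enumerated by `f m`. -/
def testSet (f : ℕ → ℕ → Option (List Bool)) (m : ℕ) : Set (ℕ → Bool) :=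
  ⋃ σ ∈ {σ : List Bool | ∃ i, f m i = some σ}, cyl σ

/-- `lam` is the fair-coin product probability measure on Cantor space:
the (unique) Borel probability measure giving each cylinder `[σ]` measure
`2 ^ (-|σ|)`. -/
def IsFairCoin (lam : Measure (ℕ → Bool)) : Prop :=
  IsProbabilityMeasure lam ∧ ∀ σ : List Bool, lam (cyl σ) = 2⁻¹ ^ σ.length

/-- A Martin-Löf test with respect to the fair-coin measure `lam`: a
computable `f : ℕ → ℕ → Option (List Bool)` whose associated open sets
`G_m` satisfy `lam (G_m) ≤ 2 ^ (-m)`. -/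
def IsMLTest (lam : Measure (ℕ → Bool)) (f : ℕ → ℕ → Option (List Bool)) : Prop :=
  Computable₂ f ∧ ∀ m : ℕ, lam (testSet f m) ≤ 2⁻¹ ^ m

/-- `Z` is Martin-Löf random: it passes every Martin-Löf test. -/
def MLRandom (lam : Measure (ℕ → Bool)) (Z : ℕ → Bool) : Prop :=
  ∀ f, IsMLTest lam f → ∃ m, Z ∉ testSet f m

/-- A measure `μ` is Martin-Löf absolutely continuous:
`inf_m μ (G_m) = 0` for every Martin-Löf test. -/
def MLAC (lam μ : Measure (ℕ → Bool)) : Prop :=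
  ∀ f, IsMLTest lam f → ⨅ m, μ (testSet f m) = 0

lemma cyl_measurable (σ : List Bool) : MeasurableSet (cyl σ) := by
  have h : cyl σ = ⋂ i : Fin σ.length, (fun Z : ℕ → Bool => Z i) ⁻¹' {σ.get i} := by
    ext Z; simp [cyl]
  rw [h]
  exact MeasurableSet.iInter fun i =>
    (measurable_pi_apply (i : ℕ)) (MeasurableSet.singleton _)

lemma testSet_measurable (f : ℕ → ℕ → Option (List Bool)) (m : ℕ) :
    MeasurableSet (testSet f m) :=
  MeasurableSet.biUnion (Set.to_countable _) fun σ _ => cyl_measurable σ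

lemma mem_testSet {f : ℕ → ℕ → Option (List Bool)} {m : ℕ} {Z : ℕ → Bool} :
    Z ∈ testSet f m ↔ ∃ σ, (∃ i, f m i = some σ) ∧ Z ∈ cyl σ := by
  simp [testSet]

lemma countable_computable :
    Set.Countable {f : ℕ → ℕ → Option (List Bool) | Computable₂ f} := by
  rw [Set.countable_iff_exists_injective]
  refine ⟨fun g => Encodable.encode
    (Classical.choose (Nat.Partrec.Code.exists_code.mp g.2)), ?_⟩
  intro g h hgh
  have hg := Classical.choose_spec (Nat.Partrec.Code.exists_code.mp g.2)
  have hh := Classical.choose_spec (Nat.Partrec.Code.exists_code.mp h.2)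
  have hcode := Encodable.encode_injective hgh
  rw [hcode, hh] at hg
  apply Subtype.ext
  funext a b
  have h1 := congrFun hg (Encodable.encode (a, b))
  simp only [Encodable.encodek, Part.coe_some, Part.bind_some, PFun.coe_val,
    Part.map_some, Part.some_inj] at h1
  exact (Encodable.encode_injective h1).symm

/-- A finite Borel measure `μ` on Cantor space is Martin-Löf
absolutely continuous iff `μ` gives measure zero to the set of non-Martin-Löf
random points. -/
theorem stmt14 (lam : Measure (ℕ → Bool)) (hlam : IsFairCoin lam)
    (μ : Measure (ℕ → Bool)) [IsFiniteMeasure μ] :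
    MLAC lam μ ↔ μ {Z : ℕ → Bool | ¬ MLRandom lam Z} = 0 := by
  constructor
  · -- forward
    intro h
    have hset : {Z : ℕ → Bool | ¬ MLRandom lam Z}
        = ⋃ f ∈ {f : ℕ → ℕ → Option (List Bool) | IsMLTest lam f},
            ⋂ m, testSet f m := by
      ext Z
      simp only [Set.mem_setOf_eq, MLRandom, Set.mem_iUnion, Set.mem_iInter]
      push_neg
      constructor
      · rintro ⟨f, hf, hm⟩; exact ⟨f, hf, hm⟩
      · rintro ⟨f, hf, hm⟩; exact ⟨f, hf, hm⟩
    rw [hset]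
    have hcnt : Set.Countable {f : ℕ → ℕ → Option (List Bool) | IsMLTest lam f} :=
      countable_computable.mono fun f hf => hf.1
    rw [measure_biUnion_null_iff hcnt]
    intro f hf
    refine le_antisymm ?_ zero_le
    rw [← h f hf]
    exact le_iInf fun m => measure_mono (Set.iInter_subset _ m)
  · -- reverse
    intro h f hf
    set g : ℕ → ℕ → Option (List Bool) :=
      fun n i => f (n + 1 + (Nat.unpair i).1) (Nat.unpair i).2 with hgdef
    have hgcomp : Computable₂ g := by
      have h1 : Computable fun p : ℕ × ℕ => p.1 + 1 + (Nat.unpair p.2).1 :=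
        Primrec.to_comp (Primrec.nat_add.comp
          (Primrec.nat_add.comp Primrec.fst (Primrec.const 1))
          (Primrec.fst.comp (Primrec.unpair.comp Primrec.snd)))
      have h2 : Computable fun p : ℕ × ℕ => (Nat.unpair p.2).2 :=
        Primrec.to_comp (Primrec.snd.comp (Primrec.unpair.comp Primrec.snd))
      exact hf.1.comp h1 h2
    have hsub : ∀ n, testSet g n ⊆ ⋃ k : ℕ, testSet f (n + 1 + k) := by
      intro n Z hZ
      obtain ⟨σ, ⟨i, hi⟩, hmem⟩ := mem_testSet.mp hZ
      exact Set.mem_iUnion.mpr ⟨(Nat.unpair i).1,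
        mem_testSet.mpr ⟨σ, ⟨(Nat.unpair i).2, hi⟩, hmem⟩⟩
    have hsub2 : ∀ n, testSet f (n + 1) ⊆ testSet g n := by
      intro n Z hZ
      obtain ⟨σ, ⟨i, hi⟩, hmem⟩ := mem_testSet.mp hZ
      refine mem_testSet.mpr ⟨σ, ⟨Nat.pair 0 i, ?_⟩, hmem⟩
      simp [hgdef, Nat.unpair_pair, hi]
    have hmono : Antitone fun n => testSet g n := by
      refine antitone_nat_of_succ_le fun n Z hZ => ?_
      obtain ⟨σ, ⟨i, hi⟩, hmem⟩ := mem_testSet.mp hZ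
      refine mem_testSet.mpr
        ⟨σ, ⟨Nat.pair ((Nat.unpair i).1 + 1) (Nat.unpair i).2, ?_⟩, hmem⟩
      simp only [hgdef, Nat.unpair_pair]
      rw [show n + 1 + ((Nat.unpair i).1 + 1) = n + 1 + 1 + (Nat.unpair i).1 by omega]
      exact hi
    have hbound : ∀ n, lam (testSet g n) ≤ 2⁻¹ ^ n := by
      intro n
      calc lam (testSet g n) ≤ lam (⋃ k : ℕ, testSet f (n + 1 + k)) :=
            measure_mono (hsub n)
        _ ≤ ∑' k : ℕ, lam (testSet f (n + 1 + k)) := measure_iUnion_le _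
        _ ≤ ∑' k : ℕ, (2⁻¹ : ℝ≥0∞) ^ (n + 1 + k) :=
            ENNReal.tsum_le_tsum fun k => hf.2 _
        _ = (2⁻¹ : ℝ≥0∞) ^ (n + 1) * ∑' k : ℕ, (2⁻¹ : ℝ≥0∞) ^ k := by
            simp [pow_add, ENNReal.tsum_mul_left]
        _ = (2⁻¹ : ℝ≥0∞) ^ n * (2⁻¹ * 2) := by
            rw [ENNReal.tsum_geometric, ENNReal.one_sub_inv_two, inv_inv, pow_succ,
              mul_assoc]
        _ = 2⁻¹ ^ n := by
            rw [ENNReal.inv_mul_cancel (by norm_num) (by norm_num), mul_one]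
    have hgtest : IsMLTest lam g := ⟨hgcomp, hbound⟩
    have hfail : (⋂ n, testSet g n) ⊆ {Z : ℕ → Bool | ¬ MLRandom lam Z} := by
      intro Z hZ hrand
      obtain ⟨m, hm⟩ := hrand g hgtest
      exact hm (Set.mem_iInter.mp hZ m)
    have hkey : μ (⋂ n, testSet g n) = ⨅ n, μ (testSet g n) :=
      hmono.measure_iInter (fun n => (testSet_measurable g n).nullMeasurableSet)
        ⟨0, measure_ne_top μ _⟩
    have hzero : (⨅ n, μ (testSet g n)) = 0 := by
      rw [← hkey]
      exact le_antisymm (le_trans (measure_mono hfail) h.le) zero_le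
    refine le_antisymm ?_ zero_le
    rw [← hzero]
    exact le_iInf fun n => iInf_le_of_le (n + 1) (measure_mono (hsub2 n))
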